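/- Let f be a complex polynomial of degree d ≥ 2 whose filled Julia set K(f) is the closed unit disc {z ∈ ℂ : |z| ≤ 1}. Then f is affinely conjugate to z ↦ z^d: there exists an affine bijection A(z) = az + b, a ≠ 0 (in fact a rotation), such that A(f(z)) = (A(z))^d for all z ∈ ℂ. -/

import Mathlib

open Filter Topology MeasureTheory Set

/-- The Schwarzian derivative of a holomorphic function. -/
noncomputable def schwarzian (F : ℂ → ℂ) (z : ℂ) : ℂ :=
  iteratedDeriv 3 F z / deriv F z - (3/2) * (iteratedDeriv 2 F z / deriv F z)^2

/-- The union of all backward orbits of the critical points: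
`Precrit(f) = {c : (f^n)'(c) = 0 for some n ≥ 1}`. -/
def precrit (f : ℂ → ℂ) : Set ℂ :=
  {c : ℂ | ∃ n : ℕ, 1 ≤ n ∧ deriv (f^[n]) c = 0}

/-- The basin of infinity of `f`. -/
def basinInf (f : ℂ → ℂ) : Set ℂ :=
  {z : ℂ | Tendsto (fun n : ℕ => ‖f^[n] z‖) atTop atTop}

/-- `f` is affinely conjugate to `z ↦ z ^ d`. -/
def conjToPow (f : ℂ → ℂ) (d : ℕ) : Prop :=
  ∃ a b : ℂ, a ≠ 0 ∧ ∀ z : ℂ, f (a * z + b) = a * z ^ d + b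

/-- A polynomial of degree `d ≥ 2` whose filled Julia set
`K(f) = ℂ ∖ X_o(f)` is the closed unit disc is affinely conjugate to `z ↦ z^d`:
there is an affine bijection `A(z) = az + b` with `A(f(z)) = (A(z))^d` for all `z`. -/
theorem stmt19 (d : ℕ) (hd : 2 ≤ d) (p : Polynomial ℂ) (hdeg : p.natDegree = d)
    (f : ℂ → ℂ) (hf : ∀ z, f z = p.eval z)
    (hK : (basinInf f)ᶜ = Metric.closedBall (0 : ℂ) 1) :
    ∃ a b : ℂ, a ≠ 0 ∧ ∀ z : ℂ, a * f z + b = (a * z + b) ^ d := by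
  -- Step A: the basin is fully invariant, hence `|f z| ≤ 1 ↔ |z| ≤ 1`.
  have hbasin : ∀ z : ℂ, f z ∈ basinInf f ↔ z ∈ basinInf f := by
    intro z
    have hshift : (fun n : ℕ => ‖f^[n] (f z)‖)
        = fun n : ℕ => ‖f^[n + 1] z‖ := by
      funext n; rw [Function.iterate_succ_apply]
    constructor
    · intro h
      have h' : Tendsto (fun n : ℕ => ‖f^[n + 1] z‖) atTop atTop := by
        rwa [← hshift]
      exact (tendsto_add_atTop_iff_nat 1).mp h'
    · intro h
      have h' : Tendsto (fun n : ℕ => ‖f^[n + 1] z‖) atTop atTop :=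
        (tendsto_add_atTop_iff_nat 1).mpr h
      show Tendsto _ atTop atTop
      rwa [hshift]
  have hmem : ∀ z : ℂ, z ∈ (basinInf f)ᶜ ↔ ‖z‖ ≤ 1 := by
    intro z
    rw [hK, Metric.mem_closedBall, dist_zero_right]
  have hdisc : ∀ z : ℂ, ‖f z‖ ≤ 1 ↔ ‖z‖ ≤ 1 := by
    intro z
    rw [← hmem, ← hmem]
    simp only [Set.mem_compl_iff]
    rw [not_iff_not]
    exact hbasin z
  have hfc : Continuous f := by
    have : f = fun z => p.eval z := funext hf
    rw [this]; exact p.continuous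
  -- Step B: `|z| = 1 → |f z| = 1`.
  have hcirc : ∀ z : ℂ, ‖z‖ = 1 → ‖f z‖ = 1 := by
    intro z hz
    have hle : ‖f z‖ ≤ 1 := (hdisc z).mpr hz.le
    have hge : 1 ≤ ‖f z‖ := by
      have htends : Tendsto (fun t : ℝ => ‖f ((t : ℂ) * z)‖)
          (𝓝[>] (1 : ℝ)) (𝓝 (‖f ((1 : ℂ) * z)‖)) := by
        apply Tendsto.mono_left _ nhdsWithin_le_nhds
        exact (continuous_norm.comp
          (hfc.comp ((Complex.continuous_ofReal).mul continuous_const))).continuousAt.tendsto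
      have hev : ∀ᶠ t : ℝ in 𝓝[>] (1 : ℝ), 1 ≤ ‖f ((t : ℂ) * z)‖ := by
        filter_upwards [self_mem_nhdsWithin] with t ht
        have h1 : ‖(t : ℂ) * z‖ = t := by
          rw [norm_mul, hz, mul_one, Complex.norm_real, Real.norm_eq_abs,
            abs_of_pos (lt_trans zero_lt_one ht)]
        by_contra hcon
        push_neg at hcon
        have := (hdisc ((t : ℂ) * z)).mp hcon.le
        rw [h1] at this
        exact absurd this (not_le.mpr ht)
      have := ge_of_tendsto htends hev
      simpa using this
    linarith
  -- Step C: polynomial identity `p * q = X ^ d` where `q` is the conjugate-reflection of `p`.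
  set conj := starRingEnd ℂ with hconj
  set q : Polynomial ℂ := (p.map conj).reflect d with hq
  have hqdeg : (p.map conj).natDegree ≤ d := by
    rw [Polynomial.natDegree_map, hdeg]
  have hident : p * q = Polynomial.X ^ d := by
    have hinf : {z : ℂ | (p * q - Polynomial.X ^ d).IsRoot z}.Infinite := by
      have hsub : (fun t : ℝ => Complex.exp (t * Complex.I)) '' (Set.Ioo 0 1)
          ⊆ {z : ℂ | (p * q - Polynomial.X ^ d).IsRoot z} := by
        rintro w ⟨t, _, rfl⟩
        set z := Complex.exp ((t : ℂ) * Complex.I) with hzdef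
        have hz1 : ‖z‖ = 1 := Complex.norm_exp_ofReal_mul_I t
        have hzne : z ≠ 0 := by
          intro h0; rw [h0] at hz1; simp at hz1
        have hczcz : conj z * z = 1 := by
          rw [← Complex.normSq_eq_conj_mul_self]
          rw [← Complex.sq_norm, hz1]; norm_num
        have : Invertible (conj z) := ⟨z, by rw [mul_comm]; exact hczcz, hczcz⟩
        have hrefl := Polynomial.eval₂_reflect_mul_pow (RingHom.id ℂ) (conj z) d
          (p.map conj) hqdeg
        have hinv : (⅟ (conj z) : ℂ) = z := by
          have : conj z * z = conj z * ⅟ (conj z) := by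
            rw [mul_invOf_self, hczcz]
          exact (mul_left_cancel₀ (by
            intro h; rw [h, zero_mul] at hczcz; exact zero_ne_one hczcz) this).symm
        rw [hinv] at hrefl
        -- `hrefl : eval₂ id z (reflect d (map conj p)) * conj z ^ d = eval₂ id (conj z) (map conj p)`
        have heq1 : q.eval z * conj z ^ d = conj (p.eval z) := by
          have h2 : Polynomial.eval₂ (RingHom.id ℂ) (conj z) (p.map conj)
              = conj (p.eval z) := by
            rw [show Polynomial.eval₂ (RingHom.id ℂ) (conj z) (p.map conj)
                = (p.map conj).eval (conj z) from rfl,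
              Polynomial.eval_map, Polynomial.eval₂_at_apply]
          rw [← h2, ← hrefl]
          rfl
        have habs : p.eval z * conj (p.eval z) = 1 := by
          rw [mul_comm, ← Complex.normSq_eq_conj_mul_self, ← Complex.sq_norm]
          rw [← hf z, hcirc z hz1]; norm_num
        have hroot : (p * q).eval z = z ^ d := by
          have : (p * q).eval z * (conj z * z) ^ d = z ^ d * 1 := by
            rw [Polynomial.eval_mul, mul_pow]
            calc p.eval z * q.eval z * (conj z ^ d * z ^ d)
                = (p.eval z * conj (p.eval z)) * z ^ d := by
                  rw [← heq1]; ring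
              _ = z ^ d * 1 := by rw [habs]; ring
          rw [hczcz, one_pow, mul_one, mul_one] at this
          exact this
        have hfinal : (p * q - Polynomial.X ^ d).IsRoot z := by
          unfold Polynomial.IsRoot
          rw [Polynomial.eval_sub, hroot, Polynomial.eval_pow, Polynomial.eval_X, sub_self]
        exact hfinal
      apply Set.Infinite.mono hsub
      apply Set.Infinite.image _ (Set.Ioo_infinite zero_lt_one)
      intro s hs t ht hst
      have := Complex.exp_eq_exp_iff_exists_int.mp hst
      obtain ⟨n, hn⟩ := this
      have hn' : (s : ℂ) = t + n * (2 * Real.pi) := by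
        have hI : ((s : ℂ) - t - n * (2 * Real.pi)) * Complex.I = 0 := by
          ring_nf
          ring_nf at hn
          linear_combination hn
        rcases mul_eq_zero.mp hI with h | h
        · linear_combination h
        · exact absurd h Complex.I_ne_zero
      have hs' : s = t + n * (2 * Real.pi) := by
        exact_mod_cast hn'
      have hn0 : n = 0 := by
        by_contra hn0
        have h2pi : (2 : ℝ) * Real.pi > 2 := by
          have := Real.pi_gt_three; linarith
        have habs : |(n : ℝ) * (2 * Real.pi)| ≥ 2 * Real.pi := by
          rw [abs_mul, abs_of_pos (by linarith : (0:ℝ) < 2 * Real.pi)]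
          have : (1 : ℝ) ≤ |(n : ℝ)| := by
            rw [← Int.cast_abs]
            exact_mod_cast Int.one_le_abs hn0
          nlinarith
        have hst' : |s - t| < 1 := by
          rw [abs_sub_lt_iff]
          constructor <;> [skip; skip] <;>
            · obtain ⟨hs1, hs2⟩ := hs; obtain ⟨ht1, ht2⟩ := ht; linarith
        rw [hs'] at hst'
        have : |(n : ℝ) * (2 * Real.pi)| < 1 := by
          convert hst' using 2; ring
        linarith
      rw [hn0] at hs'; simpa using hs'
    have := Polynomial.eq_zero_of_infinite_isRoot _ hinf
    exact sub_eq_zero.mp this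
  -- Step D: `p ∣ X ^ d`, hence `p = C c * X ^ d`.
  have hdvd : p ∣ Polynomial.X ^ d := ⟨q, hident.symm⟩
  obtain ⟨i, hid, hassoc⟩ := (dvd_prime_pow Polynomial.prime_X d).mp hdvd
  obtain ⟨u, hu⟩ := hassoc
  obtain ⟨c0, hc0u, hc0⟩ := Polynomial.isUnit_iff.mp u.isUnit
  -- `hu : p * u = X ^ i`
  have hpu : p * Polynomial.C c0 = Polynomial.X ^ i := by rw [hc0]; exact hu
  have hc0ne : c0 ≠ 0 := hc0u.ne_zero
  have hi : i = d := by
    have : (p * Polynomial.C c0).natDegree = i := by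
      rw [hpu, Polynomial.natDegree_X_pow]
    rw [Polynomial.natDegree_mul_C hc0ne, hdeg] at this
    exact this.symm
  set c : ℂ := c0⁻¹ with hc
  have hcne : c ≠ 0 := inv_ne_zero hc0ne
  have hpc : p = Polynomial.C c * Polynomial.X ^ d := by
    have : p * Polynomial.C c0 * Polynomial.C c = Polynomial.X ^ d * Polynomial.C c := by
      rw [hpu, hi]
    rw [mul_assoc, ← Polynomial.C_mul, mul_inv_cancel₀ hc0ne, Polynomial.C_1, mul_one] at this
    rw [this]; ring
  -- Step E: choose `a` with `a ^ (d-1) = c`.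
  obtain ⟨a, ha⟩ := IsAlgClosed.exists_pow_nat_eq c (n := d - 1)
    (by omega : 0 < d - 1)
  have hane : a ≠ 0 := by
    intro h0
    rw [h0, zero_pow (by omega : d - 1 ≠ 0)] at ha
    exact hcne ha.symm
  refine ⟨a, 0, hane, fun z => ?_⟩
  have hfz : f z = c * z ^ d := by
    rw [hf z, hpc, Polynomial.eval_mul, Polynomial.eval_C, Polynomial.eval_pow,
      Polynomial.eval_X]
  rw [hfz, add_zero, add_zero, mul_pow]
  have : a * c = a ^ d := by
    rw [← ha, ← pow_succ']
    congr 1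
    omega
  rw [← mul_assoc, this]
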